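/- Let G be a group and s, t ∈ G elements satisfying prod(s,t;n) = prod(t,s;n) for some n ≥ 3, such that s and t generate a group isomorphic to the Artin group A(I₂(n)) = ⟨s, t | prod(s,t;n) = prod(t,s;n)⟩ via the obvious map. Then for a positive integer m, prod(s,t;m) = prod(t,s;m) holds in G if and only if n divides m. -/

import Mathlib

/-- `altProd a b ℓ` is the alternating product `a * b * a * ⋯` with `ℓ` factors, starting with `a`. -/
def altProd {G : Type*} [Monoid G] : G → G → ℕ → G
  | _, _, 0 => 1
  | a, b, n + 1 => a * altProd b a n

/-- The single defining relator of the dihedral-type Artin group `A(I₂(n))`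
on generators `s = of true`, `t = of false`. -/
def dihedralArtinRels (n : ℕ) : Set (FreeGroup Bool) :=
  { altProd (FreeGroup.of true) (FreeGroup.of false) n
      * (altProd (FreeGroup.of false) (FreeGroup.of true) n)⁻¹ }

/-- The dihedral-type Artin group `A(I₂(n)) = ⟨s, t ∣ prod(s,t;n) = prod(t,s;n)⟩`. -/
abbrev DihedralArtin (n : ℕ) : Type := PresentedGroup (dihedralArtinRels n)

lemma altProd_succ {G : Type*} [Monoid G] (a b : G) (k : ℕ) :
    altProd a b (k + 1) = a * altProd b a k := rfl

lemma altProd_two_mul {G : Type*} [Monoid G] (a b : G) (k : ℕ) :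
    altProd a b (2 * k) = (a * b) ^ k := by
  induction k generalizing a b with
  | zero => simp [altProd]
  | succ k ih =>
      have h : 2 * (k + 1) = 2 * k + 1 + 1 := by ring
      rw [h, altProd_succ, altProd_succ, ih, pow_succ', mul_assoc]

lemma altProd_odd {G : Type*} [Monoid G] (a b : G) (k : ℕ) :
    altProd a b (2 * k + 1) = a * (b * a) ^ k := by
  rw [altProd_succ, altProd_two_mul]

lemma altProd_add {G : Type*} [Monoid G] (a b : G) (x y : ℕ) :
    altProd a b (x + y) =
      altProd a b x * (if Even x then altProd a b y else altProd b a y) := by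
  induction x generalizing a b with
  | zero => simp [altProd]
  | succ x ih =>
      have h : x + 1 + y = (x + y) + 1 := by ring
      rw [h, altProd_succ, altProd_succ, ih]
      by_cases hx : Even x <;> simp [hx, Nat.even_add_one, mul_assoc]

lemma map_altProd {G H : Type*} [Monoid G] [Monoid H] (φ : G →* H) (a b : G) (k : ℕ) :
    φ (altProd a b k) = altProd (φ a) (φ b) k := by
  induction k generalizing a b with
  | zero => simp [altProd]
  | succ k ih => simp [altProd_succ, ih]

lemma dihedral_altProd_eq_iff (n : ℕ) (m : ℕ) :
    (altProd (DihedralGroup.sr 0) (DihedralGroup.sr (1 : ZMod n)) m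
      = altProd (DihedralGroup.sr 1) (DihedralGroup.sr 0) m) ↔ ((m : ZMod n) = 0) := by
  rcases Nat.even_or_odd m with ⟨k, hk⟩ | ⟨k, hk⟩
  · have hk2 : m = 2 * k := by omega
    subst hk2
    rw [altProd_two_mul, altProd_two_mul, DihedralGroup.sr_mul_sr, DihedralGroup.sr_mul_sr]
    have h1 : ((1 : ZMod n) - 0) = 1 := by ring
    have h2 : ((0 : ZMod n) - 1) = -1 := by ring
    rw [h1, h2]
    have h3 : (DihedralGroup.r (-1 : ZMod n)) = (DihedralGroup.r (1 : ZMod n))⁻¹ := by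
      rw [eq_inv_iff_mul_eq_one]; simp
    rw [h3, inv_pow, DihedralGroup.r_one_pow, eq_inv_iff_mul_eq_one,
      DihedralGroup.r_mul_r, DihedralGroup.one_def, DihedralGroup.r.injEq]
    push_cast
    constructor <;> intro h <;> linear_combination h
  · subst hk
    rw [altProd_odd, altProd_odd, DihedralGroup.sr_mul_sr, DihedralGroup.sr_mul_sr]
    have h1 : ((1 : ZMod n) - 0) = 1 := by ring
    have h2 : ((0 : ZMod n) - 1) = -1 := by ring
    rw [h1, h2]
    have h3 : (DihedralGroup.r (-1 : ZMod n)) = (DihedralGroup.r (1 : ZMod n))⁻¹ := by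
      rw [eq_inv_iff_mul_eq_one]; simp
    rw [h3, inv_pow, DihedralGroup.r_one_pow]
    have h4 : ((DihedralGroup.r (k : ZMod n))⁻¹ : DihedralGroup n)
        = DihedralGroup.r (-(k : ZMod n)) := by
      rw [eq_comm, eq_inv_iff_mul_eq_one, DihedralGroup.r_mul_r]
      simp
    rw [h4]
    simp only [DihedralGroup.sr_mul_r, DihedralGroup.sr.injEq]
    push_cast
    constructor <;> intro h <;> linear_combination -h

/-- If `n ∣ m` then the relation holds (pure group computation). -/
lemma altProd_eq_of_dvd {G : Type*} [Group G] (n : ℕ) (s t : G)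
    (hrel : altProd s t n = altProd t s n) (k : ℕ) :
    altProd s t (n * k) = altProd t s (n * k) := by
  induction k with
  | zero => simp [altProd]
  | succ k ih =>
      have h : n * (k + 1) = n + n * k := by ring
      rw [h, altProd_add, altProd_add, hrel, ih]

theorem artin_I2_relations_in_group {G : Type*} [Group G] (n : ℕ) (hn : 3 ≤ n) (s t : G)
    (hrel : altProd s t n = altProd t s n)
    (hembed : ∃ φ : DihedralArtin n →* G,
      φ (PresentedGroup.of true) = s ∧ φ (PresentedGroup.of false) = t ∧
        Function.Injective φ) :
    ∀ m : ℕ, 0 < m → (altProd s t m = altProd t s m ↔ n ∣ m) := by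
  obtain ⟨φ, hφs, hφt, hφinj⟩ := hembed
  have hnz : n ≠ 0 := by omega
  haveI : NeZero n := ⟨hnz⟩
  -- the homomorphism to the dihedral group
  have hcond : ∀ w ∈ dihedralArtinRels n,
      FreeGroup.lift (fun b : Bool =>
        if b then DihedralGroup.sr (0 : ZMod n) else DihedralGroup.sr 1) w = 1 := by
    intro w hw
    rcases hw with rfl
    rw [map_mul, map_inv, map_altProd, map_altProd]
    simp only [FreeGroup.lift_apply_of, if_true, if_false, Bool.false_eq_true]
    rw [(dihedral_altProd_eq_iff n n).mpr (by simp)]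
    simp
  set ψ : DihedralArtin n →* DihedralGroup n := PresentedGroup.toGroup hcond with hψ
  intro m hm
  constructor
  · -- only if
    intro heq
    set r := m % n with hr
    have hmr : m = n * (m / n) + r := (Nat.div_add_mod m n).symm
    have hg : altProd s t (n * (m / n)) = altProd t s (n * (m / n)) :=
      altProd_eq_of_dvd n s t hrel _
    rw [hmr, altProd_add, altProd_add, hg] at heq
    have hcancel := mul_left_cancel heq
    have hrrel : altProd s t r = altProd t s r := by
      by_cases he : Even (n * (m / n))
      · simpa [he] using hcancel
      · simpa [he] using hcancel.symm
    -- lift to the Artin group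
    have hlift : altProd (PresentedGroup.of (rels := dihedralArtinRels n) true)
        (PresentedGroup.of false) r = altProd (PresentedGroup.of false)
        (PresentedGroup.of true) r := by
      apply hφinj
      rw [map_altProd, map_altProd, hφs, hφt]
      exact hrrel
    have hdih := congrArg ψ hlift
    rw [map_altProd, map_altProd] at hdih
    have hof : ψ (PresentedGroup.of true) = DihedralGroup.sr 0 :=
      PresentedGroup.toGroup.of hcond
    have hof' : ψ (PresentedGroup.of false) = DihedralGroup.sr 1 :=
      PresentedGroup.toGroup.of hcond
    rw [hof, hof'] at hdih
    have hzero : ((r : ℕ) : ZMod n) = 0 := (dihedral_altProd_eq_iff n r).mp hdih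
    have hdvd : n ∣ r := (ZMod.natCast_eq_zero_iff r n).mp hzero
    have hrlt : r < n := Nat.mod_lt m (by omega)
    exact Nat.dvd_of_mod_eq_zero (Nat.eq_zero_of_dvd_of_lt hdvd hrlt)
  · rintro ⟨k, rfl⟩
    exact altProd_eq_of_dvd n s t hrel k
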